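/- Let P be a symmetric n×n real matrix and Q a m×n real matrix. Suppose xᵀPx < 0 for every nonzero x ∈ ℝⁿ with Qx = 0. Then there exists c* > 0 such that for all c > c*, the matrix P − c·QᵀQ is negative definite. -/

import Mathlib

open scoped Matrix

private lemma quad_smul' {n : ℕ} (M : Matrix (Fin n) (Fin n) ℝ) (t : ℝ) (z : Fin n → ℝ) :
    (t • z) ⬝ᵥ M.mulVec (t • z) = t ^ 2 * (z ⬝ᵥ M.mulVec z) := by
  rw [Matrix.mulVec_smul, smul_dotProduct, dotProduct_smul]
  simp [smul_eq_mul]; ring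

private lemma quad_cont' {n : ℕ} (M : Matrix (Fin n) (Fin n) ℝ) :
    Continuous fun x : Fin n → ℝ => x ⬝ᵥ M.mulVec x := by
  simp only [dotProduct, Matrix.mulVec]
  exact continuous_finset_sum _ fun i _ =>
    (continuous_apply i).mul (continuous_finset_sum _ fun j _ =>
      (continuous_const.mul (continuous_apply j)))

private lemma dp_self_nonneg' {k : ℕ} (v : Fin k → ℝ) : 0 ≤ v ⬝ᵥ v :=
  Finset.sum_nonneg fun i _ => mul_self_nonneg _

theorem debreu_lemma {n m : ℕ} (P : Matrix (Fin n) (Fin n) ℝ) (Q : Matrix (Fin m) (Fin n) ℝ)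
    (hP : P.IsSymm)
    (h : ∀ x : Fin n → ℝ, x ≠ 0 → Q.mulVec x = 0 → x ⬝ᵥ P.mulVec x < 0) :
    ∃ cstar > (0 : ℝ), ∀ c > cstar, ∀ x : Fin n → ℝ, x ≠ 0 →
      x ⬝ᵥ (P - c • (Qᵀ * Q)).mulVec x < 0 := by
  -- quadratic forms
  set f : (Fin n → ℝ) → ℝ := fun x => x ⬝ᵥ P.mulVec x with hf
  set g : (Fin n → ℝ) → ℝ := fun x => x ⬝ᵥ (Qᵀ * Q).mulVec x with hg
  have hgQ : ∀ x : Fin n → ℝ, g x = Q.mulVec x ⬝ᵥ Q.mulVec x := fun x => by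
    simp only [hg]
    rw [← Matrix.mulVec_mulVec, Matrix.dotProduct_mulVec, Matrix.vecMul_transpose]
  have hg0 : ∀ x : Fin n → ℝ, 0 ≤ g x := fun x => by
    rw [hgQ]; exact dp_self_nonneg' _
  have hgzero : ∀ x : Fin n → ℝ, g x = 0 → Q.mulVec x = 0 := fun x hx => by
    rw [hgQ] at hx; exact dotProduct_self_eq_zero.mp hx
  -- the expression is f x - c * g x
  have hexpr : ∀ (c : ℝ) (x : Fin n → ℝ),
      x ⬝ᵥ (P - c • (Qᵀ * Q)).mulVec x = f x - c * g x := by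
    intro c x
    rw [Matrix.sub_mulVec, dotProduct_sub, Matrix.smul_mulVec,
      dotProduct_smul, smul_eq_mul]
  -- trivial case n = 0
  rcases Nat.eq_zero_or_pos n with hn | hn
  · subst hn
    exact ⟨1, one_pos, fun c _ x hx => absurd (Subsingleton.elim x 0) hx⟩
  haveI : Nonempty (Fin n) := ⟨⟨0, hn⟩⟩
  -- the sphere
  set S : Set (Fin n → ℝ) := Metric.sphere 0 1 with hS
  have hScomp : IsCompact S := isCompact_sphere 0 1
  have hSne : S.Nonempty := NormedSpace.sphere_nonempty.mpr zero_le_one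
  have hSx : ∀ x ∈ S, x ≠ 0 := by
    intro x hx h0
    rw [hS, Metric.mem_sphere, dist_zero_right, h0, norm_zero] at hx
    norm_num at hx
  -- key claim on the sphere
  have key : ∃ cstar > (0 : ℝ), ∀ c > cstar, ∀ x ∈ S, f x - c * g x < 0 := by
    set K : Set (Fin n → ℝ) := S ∩ {x | 0 ≤ f x} with hK
    have hKcomp : IsCompact K :=
      hScomp.inter_right (isClosed_le continuous_const (quad_cont' P))
    rcases K.eq_empty_or_nonempty with hKe | hKne
    · refine ⟨1, one_pos, fun c hc x hx => ?_⟩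
      have hfx : f x < 0 := by
        by_contra hfx
        exact Set.eq_empty_iff_forall_notMem.mp hKe x ⟨hx, not_lt.mp hfx⟩
      have : 0 ≤ c * g x := mul_nonneg (le_of_lt (lt_trans one_pos hc)) (hg0 x)
      linarith
    · -- min of g on K
      obtain ⟨x0, hx0K, hx0min⟩ :=
        hKcomp.exists_isMinOn hKne ((quad_cont' (Qᵀ * Q)).continuousOn)
      have hδ : 0 < g x0 := by
        rcases lt_or_eq_of_le (hg0 x0) with h' | h'
        · exact h'
        · exfalso
          have hx0ne : x0 ≠ 0 := hSx x0 hx0K.1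
          have := h x0 hx0ne (hgzero x0 h'.symm)
          exact absurd this (not_lt.mpr hx0K.2)
      -- max of f on S
      obtain ⟨x1, hx1S, hx1max⟩ :=
        hScomp.exists_isMaxOn hSne ((quad_cont' P).continuousOn)
      set M := f x1 with hM
      refine ⟨max (M / g x0) 0 + 1, by positivity, fun c hc x hx => ?_⟩
      have hc0 : 0 < c := lt_trans (by positivity) hc
      rcases lt_or_ge (f x) 0 with hfx | hfx
      · have : 0 ≤ c * g x := mul_nonneg hc0.le (hg0 x)
        linarith
      · have hxK : x ∈ K := ⟨hx, hfx⟩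
        have h1 : g x0 ≤ g x := hx0min hxK
        have h2 : f x ≤ M := hx1max hx
        have h3 : M / g x0 < c :=
          calc M / g x0 ≤ max (M / g x0) 0 := le_max_left _ _
            _ < max (M / g x0) 0 + 1 := lt_add_one _
            _ < c := hc
        have h4 : M < c * g x0 := (div_lt_iff₀ hδ).mp h3
        have h5 : c * g x0 ≤ c * g x := mul_le_mul_of_nonneg_left h1 hc0.le
        linarith
  -- scale to all nonzero x
  obtain ⟨cstar, hcstar, hkey⟩ := key
  refine ⟨cstar, hcstar, fun c hc x hx => ?_⟩
  rw [hexpr]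
  have hxn : 0 < ‖x‖ := norm_pos_iff.mpr hx
  set r : ℝ := ‖x‖ with hr
  set y : Fin n → ℝ := r⁻¹ • x with hy
  have hyS : y ∈ S := by
    rw [hS, Metric.mem_sphere, dist_zero_right, hy, norm_smul, norm_inv, hr.symm, norm_norm]
    field_simp
    exact hr
  have hxy : x = r • y := by
    rw [hy, smul_inv_smul₀ (ne_of_gt hxn)]
  have h1 : f x = r ^ 2 * f y := by
    rw [hf]
    conv_lhs => rw [hxy]
    exact quad_smul' P r y
  have h2 : g x = r ^ 2 * g y := by
    rw [hg]
    conv_lhs => rw [hxy]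
    exact quad_smul' _ r y
  have hky := hkey c hc y hyS
  have hsq : 0 < r ^ 2 := by positivity
  rw [h1, h2]
  have heq : r ^ 2 * f y - c * (r ^ 2 * g y) = r ^ 2 * (f y - c * g y) := by ring
  rw [heq]
  exact mul_neg_of_pos_of_neg hsq hky
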